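/- If h and k are odd, coprime, positive integers, then S(h,k) = 0. -/

import Mathlib

/-- `S(h,k) := ∑_{j=1}^{k-1} (-1)^{j+1+⌊hj/k⌋}` (here `h*j/k` is natural-number
division, which agrees with the floor of the rational `hj/k`). -/
def Spair (h k : ℕ) : ℤ := ∑ j ∈ Finset.Icc 1 (k - 1), (-1 : ℤ) ^ (j + 1 + h * j / k)

lemma auxpow (m n : ℕ) (hmn : Odd (m + n)) : (-1:ℤ)^m + (-1:ℤ)^n = 0 := by
  rcases Nat.even_or_odd m with hm | hm
  · have hn : Odd n := by
      rcases hm with ⟨a, ha⟩; rcases hmn with ⟨b, hb⟩; exact ⟨b - a, by omega⟩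
    rw [hm.neg_one_pow, hn.neg_one_pow]; ring
  · have hn : Even n := by
      rcases hm with ⟨a, ha⟩; rcases hmn with ⟨b, hb⟩; exact ⟨b - a, by omega⟩
    rw [hm.neg_one_pow, hn.neg_one_pow]; ring

lemma quotsum2 (h k : ℕ) (hk : 0 < k) (q q' r r' : ℕ)
    (hr : r ≠ 0) (r1 : r < k) (r2 : r' < k)
    (key : (k:ℤ) * ((q:ℤ) + q' + 1 - h) = (k:ℤ) - r - r') : q + q' + 1 = h := by
  have hk' : (0:ℤ) < k := by exact_mod_cast hk
  have hr1 : (1:ℤ) ≤ r := by exact_mod_cast Nat.one_le_iff_ne_zero.mpr hr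
  have hr2 : (0:ℤ) ≤ r' := by positivity
  have hrk1 : (r:ℤ) < k := by exact_mod_cast r1
  have hrk2 : (r':ℤ) < k := by exact_mod_cast r2
  have hz : (q:ℤ) + q' + 1 - h = 0 := by
    rcases lt_trichotomy ((q:ℤ) + q' + 1 - h) 0 with hlt | heq | hgt
    · exfalso; nlinarith
    · exact heq
    · exfalso; nlinarith
  omega

lemma quotsum (h k j : ℕ) (hk : 0 < k) (hj1 : 1 ≤ j) (hj2 : j ≤ k - 1)
    (hcop : Nat.Coprime h k) : h * j / k + h * (k - j) / k + 1 = h := by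
  have hjk : j < k := by omega
  have hr : h * j % k ≠ 0 := by
    intro H
    have hd : k ∣ h * j := Nat.dvd_of_mod_eq_zero H
    have h2 : k ∣ j := Nat.Coprime.dvd_of_dvd_mul_left hcop.symm hd
    have := Nat.le_of_dvd (by omega) h2
    omega
  have e1 := Nat.div_add_mod (h * j) k
  have e2 := Nat.div_add_mod (h * (k - j)) k
  have e3 : h * (k - j) + h * j = h * k := by rw [← Nat.mul_add]; congr 1; omega
  have r1 : h * j % k < k := Nat.mod_lt _ hk
  have r2 : h * (k - j) % k < k := Nat.mod_lt _ hk
  set q := h * j / k with hq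
  set q' := h * (k - j) / k with hq'
  set r := h * j % k with hrr
  set r' := h * (k - j) % k with hrr'
  clear_value q q' r r'
  have key : (k:ℤ) * ((q:ℤ) + q' + 1 - h) = (k:ℤ) - r - r' := by
    have e1' : (k:ℤ) * q + r = (h:ℤ) * j := by exact_mod_cast e1
    have e2' : (k:ℤ) * q' + r' = (h:ℤ) * (k - j : ℕ) := by exact_mod_cast e2
    have e3' : (h:ℤ) * (k - j : ℕ) + (h:ℤ) * j = (h:ℤ) * k := by exact_mod_cast e3
    linarith [e1', e2', e3', mul_comm (h:ℤ) (k:ℤ)]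
  exact quotsum2 h k hk q q' r r' hr r1 r2 key

theorem stmt_11 (h k : ℕ) (hh : 0 < h) (hk : 0 < k) (hho : Odd h) (hko : Odd k)
    (hcop : Nat.Coprime h k) : Spair h k = 0 := by
  unfold Spair
  apply Finset.sum_involution (fun a _ => k - a)
  · intro a ha
    simp only [Finset.mem_Icc] at ha
    apply auxpow
    have hq := quotsum h k a hk ha.1 ha.2 hcop
    obtain ⟨x, hx⟩ := hho
    obtain ⟨y, hy⟩ := hko
    exact ⟨x + y + 1, by omega⟩
  · intro a ha _
    simp only [Finset.mem_Icc] at ha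
    obtain ⟨y, hy⟩ := hko
    show k - a ≠ a
    omega
  · intro a ha
    simp only [Finset.mem_Icc] at ha ⊢
    omega
  · intro a ha
    simp only [Finset.mem_Icc] at ha
    omega
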